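/- If P is an Eulerian poset of positive rank, then the local cd-index of P vanishes: ℓ^Φ_P = 0. Equivalently, Ψ_P = Ψ_{∂P}·a and Φ_{Σ̃P} = Φ_{∂P}·c. -/

import Mathlib

set_option linter.unusedSectionVars false
set_option maxHeartbeats 1000000


open scoped Classical

noncomputable section

namespace CDIndex

variable {α β : Type}

/-- The natural rank function of a graded poset: `rho x` is one less than the largest
cardinality of a chain contained in `Set.Iic x` (i.e. the length of a maximal chain of
the interval `[0̂, x]`). -/
def rho [PartialOrder α] (x : α) : ℕ :=
  sSup {k : ℕ | ∃ s : Finset α,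
    IsChain (· ≤ ·) (s : Set α) ∧ (s : Set α) ⊆ Set.Iic x ∧ s.card = k + 1}

/-- A subset `S` of a poset is graded of rank `n` if every maximal chain of `S`
has exactly `n + 1` elements (i.e. length `n`). -/
def IsGradedSetOfRank [PartialOrder α] (S : Set α) (n : ℕ) : Prop :=
  ∀ s : Finset α, (s : Set α) ⊆ S → IsChain (· ≤ ·) (s : Set α) →
    (∀ t : Finset α, (t : Set α) ⊆ S → IsChain (· ≤ ·) (t : Set α) → s ⊆ t → s = t) →
    s.card = n + 1

/-- A poset is graded of rank `n` if every maximal chain has length `n`. -/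
def IsGradedOfRank (α : Type) [PartialOrder α] (n : ℕ) : Prop :=
  IsGradedSetOfRank (Set.univ : Set α) n

/-- Every interval `[s, t]` with `s < t`, `s, t ∈ S`, has equally many elements of even
rank and of odd rank. -/
def BalancedIntervalsIn [PartialOrder α] (S : Set α) : Prop :=
  ∀ s ∈ S, ∀ t ∈ S, s < t →
    {y ∈ Set.Icc s t | Even (rho y)}.ncard = {y ∈ Set.Icc s t | Odd (rho y)}.ncard

/-- An Eulerian poset of rank `n`: a graded poset with `0̂` and `1̂` in which every
interval of positive length has equally many elements of each parity of rank. -/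
def IsEulerianOfRank (α : Type) [PartialOrder α] (n : ℕ) : Prop :=
  (∃ b : α, ∀ z, b ≤ z) ∧ (∃ t : α, ∀ z, z ≤ t) ∧
    IsGradedOfRank α n ∧ BalancedIntervalsIn (Set.univ : Set α)

/-- A lower Eulerian poset of rank `n`: a graded poset with `0̂` all of whose intervals
are Eulerian. -/
def IsLowerEulerianOfRank (α : Type) [PartialOrder α] (n : ℕ) : Prop :=
  (∃ b : α, ∀ z, b ≤ z) ∧ IsGradedOfRank α n ∧ BalancedIntervalsIn (Set.univ : Set α)

/-- A lower order ideal `S` (of a poset) which is lower Eulerian of rank `n`. -/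
def IsLowerEulerianSetOfRank [PartialOrder α] (S : Set α) (n : ℕ) : Prop :=
  IsGradedSetOfRank S n ∧ BalancedIntervalsIn S

/-- The boundary of (a lower order ideal `S` of) a graded poset of rank `n`: the lower
order ideal generated by the rank `n - 1` elements which are covered by exactly one
element. -/
def boundaryIn [PartialOrder α] (S : Set α) (n : ℕ) : Set α :=
  {y | y ∈ S ∧ ∃ x ∈ S, rho x = n - 1 ∧ {z ∈ S | x ⋖ z}.ncard = 1 ∧ y ≤ x}

/-- The boundary `∂P` of a graded poset of rank `n`. -/
def boundary (α : Type) [PartialOrder α] (n : ℕ) : Set α :=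
  boundaryIn (Set.univ : Set α) n

/-- `α` is a near-Eulerian poset of rank `n`: it is obtained from an Eulerian poset `Q`
of rank `n + 1` by removing the maximal element and one element `q` of rank `n`. -/
def IsNearEulerianOfRank (α : Type) [PartialOrder α] [Finite α] (n : ℕ) : Prop :=
  ∃ (Q : Type) (_ : PartialOrder Q) (_ : Finite Q) (q top : Q),
    IsEulerianOfRank Q (n + 1) ∧ (∀ z, z ≤ top) ∧ rho q = n ∧ q ≠ top ∧
    Nonempty (α ≃o {x : Q // x ≠ q ∧ x ≠ top})

/-- `α` is (isomorphic to) the boundary of an Eulerian poset, where `α` has rank `n`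
(so the Eulerian poset has rank `n + 1`). -/
def IsBoundaryOfEulerianOfRank (α : Type) [PartialOrder α] [Finite α] (n : ℕ) : Prop :=
  ∃ (Q : Type) (_ : PartialOrder Q) (_ : Finite Q) (top : Q),
    IsEulerianOfRank Q (n + 1) ∧ (∀ z, z ≤ top) ∧
    Nonempty (α ≃o {x : Q // x ≠ top})

/-! ### The semisuspension -/

/-- The semisuspension of `α` relative to a set `S` (intended: `S = ∂α`): the poset `α`
together with one new element `q` lying above `0̂` and above every element of `S`. -/
@[ext] structure Semisusp (α : Type) (S : Set α) : Type where
  toOpt : Option α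

namespace Semisusp

variable {S : Set α}

/-- The new vertex `q` of the semisuspension. -/
def q : Semisusp α S := ⟨none⟩

/-- The inclusion of `α` into its semisuspension. -/
def incl (a : α) : Semisusp α S := ⟨some a⟩

instance instPartialOrder [PartialOrder α] [OrderBot α] : PartialOrder (Semisusp α S) where
  le x y := match x, y with
    | ⟨some a⟩, ⟨some b⟩ => a ≤ b
    | ⟨some a⟩, ⟨none⟩ => a = ⊥ ∨ ∃ s ∈ S, a ≤ s
    | ⟨none⟩, ⟨some _⟩ => False
    | ⟨none⟩, ⟨none⟩ => True
  le_refl x := by rcases x with ⟨_ | a⟩ <;> simp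
  le_trans x y z hxy hyz := by
    rcases x with ⟨_ | a⟩ <;> rcases y with ⟨_ | b⟩ <;> rcases z with ⟨_ | c⟩ <;>
      simp_all
    · rcases hyz with h | ⟨s, hs, hbs⟩
      · subst h
        exact Or.inl (le_bot_iff.mp hxy)
      · exact Or.inr ⟨s, hs, le_trans hxy hbs⟩
    · exact le_trans hxy hyz
  le_antisymm x y hxy hyx := by
    rcases x with ⟨_ | a⟩ <;> rcases y with ⟨_ | b⟩ <;> simp_all
    exact le_antisymm hxy hyx

instance [PartialOrder α] [OrderBot α] : OrderBot (Semisusp α S) where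
  bot := ⟨some ⊥⟩
  bot_le x := by
    rcases x with ⟨_ | a⟩
    · exact Or.inl rfl
    · show (⊥ : α) ≤ a
      exact bot_le

def equivOption : Semisusp α S ≃ Option α where
  toFun := toOpt
  invFun := mk
  left_inv _ := rfl
  right_inv _ := rfl

instance [Finite α] : Finite (Semisusp α S) := by
  have := Fintype.ofFinite α
  exact Finite.of_equiv (Option α) (equivOption (S := S)).symm

end Semisusp

/-! ### The flag enumerator, the `ab`-index and the `cd`-index -/

variable (K : Type) [Field K] [CharZero K]

/-- The free noncommutative algebra `K⟨a, b⟩`. -/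
abbrev FA := FreeAlgebra K (Fin 2)

/-- The letter `a`. -/
def la : FA K := FreeAlgebra.ι K 0

/-- The letter `b`. -/
def lb : FA K := FreeAlgebra.ι K 1

/-- `c = a + b`. -/
def lc : FA K := la K + lb K

/-- `d = ab + ba`. -/
def ld : FA K := la K * lb K + lb K * la K

/-- The characteristic monomial `u_S = u_1 ⋯ u_n` of a set `S` of ranks, where
`u_i = b` if `i ∈ S` and `u_i = a` otherwise. -/
def uWord (n : ℕ) (S : Set ℕ) : FA K :=
  (List.ofFn fun i : Fin n => if (i : ℕ) + 1 ∈ S then lb K else la K).prod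

/-- Chains of the subposet `S` which contain the element `b0` (intended: the minimal
element of `S`). -/
def chainsIn [PartialOrder α] (S : Set α) (b0 : α) : Set (Finset α) :=
  {C | (C : Set α) ⊆ S ∧ IsChain (· ≤ ·) (C : Set α) ∧ b0 ∈ C}

/-- The flag enumerator `Υ` of the subposet `S` with minimal element `b0`, of rank `n`;
ranks are computed relative to `b0`. -/
def upsSet [PartialOrder α] (S : Set α) (b0 : α) (n : ℕ) : FA K :=
  ∑ᶠ C ∈ chainsIn S b0, uWord K n ((fun y => rho y - rho b0) '' (C : Set α))

/-- The substitution `a ↦ a - b`, `b ↦ b` turning the flag enumerator into the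
`ab`-index. -/
def toAB : FA K →ₐ[K] FA K :=
  FreeAlgebra.lift K (fun i : Fin 2 => if i = 0 then la K - lb K else lb K)

/-- The `ab`-index `Ψ` of the subposet `S` with minimal element `b0`, of rank `n`:
`Ψ(a,b) = Υ(a-b, b)`. -/
def psiS [PartialOrder α] (S : Set α) (b0 : α) (n : ℕ) : FA K :=
  toAB K (upsSet K S b0 n)

/-- The subalgebra `K⟨c, d⟩ ⊆ K⟨a, b⟩` generated by `c = a + b` and `d = ab + ba`. -/
def cdSub : Subalgebra K (FA K) := Algebra.adjoin K {lc K, ld K}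
-- auxiliary
def Rset [PartialOrder β] (x : β) : Set ℕ :=
  {k : ℕ | ∃ s : Finset β,
    IsChain (· ≤ ·) (s : Set β) ∧ (s : Set β) ⊆ Set.Iic x ∧ s.card = k + 1}

lemma rho_eq_sSup_Rset [PartialOrder β] (x : β) : rho x = sSup (Rset x) := rfl

lemma zero_mem_Rset [PartialOrder β] (x : β) : 0 ∈ Rset x := by
  refine ⟨{x}, ?_, by simp, by simp⟩
  simp only [Finset.coe_singleton]
  exact Set.subsingleton_singleton.isChain

lemma Rset_bddAbove [PartialOrder β] [Finite β] (x : β) : BddAbove (Rset x) := by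
  have := Fintype.ofFinite β
  refine ⟨Fintype.card β, fun k hk => ?_⟩
  obtain ⟨s, _, _, hcard⟩ := hk
  have := Finset.card_le_univ s
  omega

lemma le_rho_of_mem [PartialOrder β] [Finite β] {x : β} {k : ℕ} (hk : k ∈ Rset x) :
    k ≤ rho x := le_csSup (Rset_bddAbove x) hk

lemma rho_mem_Rset [PartialOrder β] [Finite β] (x : β) : rho x ∈ Rset x :=
  Nat.sSup_mem ⟨0, zero_mem_Rset x⟩ (Rset_bddAbove x)

lemma rho_le_of_forall [PartialOrder β] {x : β} {m : ℕ} (h : ∀ k ∈ Rset x, k ≤ m) :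
    rho x ≤ m := by
  rw [rho_eq_sSup_Rset]; exact csSup_le ⟨0, zero_mem_Rset x⟩ h

lemma rho_eq_zero_of_isMin [PartialOrder β] {x : β} (hx : IsMin x) : rho x = 0 := by
  refine Nat.le_zero.1 (rho_le_of_forall fun k hk => ?_)
  obtain ⟨s, _, hsub, hcard⟩ := hk
  have hs : s ⊆ {x} := fun y hy => by
    simpa using le_antisymm (hsub hy) (hx (hsub hy))
  have := Finset.card_le_card hs
  simp only [Finset.card_singleton] at this
  omega

lemma rho_lt_of_lt [PartialOrder β] [Finite β] {x y : β} (hxy : x < y) : rho x < rho y := by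
  obtain ⟨s, hsc, hsub, hcard⟩ := rho_mem_Rset x
  have hy : y ∉ s := fun hy => absurd hxy (show y ≤ x from hsub hy).not_gt
  have h1 : (rho x + 1) ∈ Rset y := by
    refine ⟨insert y s, ?_, ?_, ?_⟩
    · rw [Finset.coe_insert]
      exact hsc.insert fun b hb _ => Or.inr (le_trans (hsub hb) hxy.le)
    · rw [Finset.coe_insert]
      exact Set.insert_subset le_rfl (hsub.trans (Set.Iic_subset_Iic.2 hxy.le))
    · rw [Finset.card_insert_of_notMem hy, hcard]
  exact lt_of_lt_of_le (Nat.lt_succ_self _) (le_rho_of_mem h1)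

lemma rho_mono [PartialOrder β] [Finite β] {x y : β} (hxy : x ≤ y) : rho x ≤ rho y := by
  rcases eq_or_lt_of_le hxy with rfl | h
  · exact le_rfl
  · exact (rho_lt_of_lt h).le

lemma exists_maximal_chain_superset [PartialOrder β] [Finite β] (s : Finset β)
    (hs : IsChain (· ≤ ·) (s : Set β)) :
    ∃ t : Finset β, s ⊆ t ∧ IsChain (· ≤ ·) (t : Set β) ∧
      ∀ u : Finset β, IsChain (· ≤ ·) (u : Set β) → t ⊆ u → t = u := by
  have := Fintype.ofFinite β
  classical
  set T : Finset (Finset β) :=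
    Finset.univ.filter (fun t => IsChain (· ≤ ·) (t : Set β) ∧ s ⊆ t) with hT
  have hsT : s ∈ T := by simp [hT, hs]
  obtain ⟨t, htT, hmax⟩ := T.exists_max_image Finset.card ⟨s, hsT⟩
  simp only [hT, Finset.mem_filter, Finset.mem_univ, true_and] at htT hmax
  refine ⟨t, htT.2, htT.1, fun u huc htu => ?_⟩
  have huT : IsChain (· ≤ ·) (u : Set β) ∧ s ⊆ u := ⟨huc, htT.2.trans htu⟩
  exact Finset.eq_of_subset_of_card_le htu (hmax u (by simp [hT, huT.1, huT.2]))

section Graded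
variable [PartialOrder β] [Finite β] {n : ℕ}

lemma chain_card_le (hg : IsGradedOfRank β n) {s : Finset β}
    (hs : IsChain (· ≤ ·) (s : Set β)) : s.card ≤ n + 1 := by
  obtain ⟨t, hst, htc, hmax⟩ := exists_maximal_chain_superset s hs
  have ht : t.card = n + 1 := hg t (by simp) htc (fun u _ huc htu => hmax u huc htu)
  exact ht ▸ Finset.card_le_card hst

lemma rho_le_n (hg : IsGradedOfRank β n) (x : β) : rho x ≤ n := by
  refine rho_le_of_forall fun k hk => ?_
  obtain ⟨s, hsc, _, hcard⟩ := hk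
  have := chain_card_le hg hsc
  omega

variable [OrderBot β] [OrderTop β]

lemma rho_bot' : rho (⊥ : β) = 0 := rho_eq_zero_of_isMin isMin_bot

lemma rho_top' (hg : IsGradedOfRank β n) : rho (⊤ : β) = n := by
  obtain ⟨t, _, htc, hmax⟩ :=
    exists_maximal_chain_superset (∅ : Finset β) (by simp)
  have ht : t.card = n + 1 := hg t (by simp) htc (fun u _ huc htu => hmax u huc htu)
  refine le_antisymm (rho_le_n hg ⊤) (le_rho_of_mem ⟨t, htc, fun y _ => le_top, by omega⟩)

lemma rho_lt_n_of_ne_top (hg : IsGradedOfRank β n) {y : β} (hy : y ≠ ⊤) : rho y < n := by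
  have := rho_lt_of_lt (lt_of_le_of_ne le_top hy)
  rwa [rho_top' hg] at this

lemma top_mem_maximal_chain {t : Finset β} (htc : IsChain (· ≤ ·) (t : Set β))
    (hmax : ∀ u : Finset β, IsChain (· ≤ ·) (u : Set β) → t ⊆ u → t = u) : (⊤ : β) ∈ t := by
  classical
  have : t = insert ⊤ t := by
    refine hmax _ ?_ (Finset.subset_insert _ _)
    rw [Finset.coe_insert]
    exact htc.insert fun b hb _ => Or.inr le_top
  rw [this]; exact Finset.mem_insert_self _ _

lemma exists_special_coatom (hg : IsGradedOfRank β n) (hn : 0 < n) {y : β} (hy : y ≠ ⊤) :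
    ∃ x : β, rho x = n - 1 ∧ {z : β | x ⋖ z}.ncard = 1 ∧ y ≤ x := by
  classical
  have hchain : IsChain (· ≤ ·) (({y, ⊤} : Finset β) : Set β) := by
    intro a ha b hb hab
    simp only [Finset.coe_insert, Finset.coe_singleton, Set.mem_insert_iff,
      Set.mem_singleton_iff] at ha hb
    rcases ha with rfl | rfl <;> rcases hb with rfl | rfl <;> simp_all [le_top]
  obtain ⟨t, hst, htc, hmax⟩ := exists_maximal_chain_superset _ hchain
  have htcard : t.card = n + 1 := hg t (by simp) htc (fun u _ huc htu => hmax u huc htu)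
  have hyt : y ∈ t := hst (by simp)
  have htt : (⊤ : β) ∈ t := hst (by simp)
  have hyne : y ∈ t.erase ⊤ := Finset.mem_erase.2 ⟨hy, hyt⟩
  have htc' : IsChain (· ≤ ·) ((t.erase ⊤ : Finset β) : Set β) :=
    htc.mono (by simp [Finset.coe_subset.2 (Finset.erase_subset _ _)])
  -- maximal element of the chain t.erase ⊤
  obtain ⟨x, hxmem, hxmax'⟩ := Finset.exists_maximal (s := t.erase ⊤) ⟨y, hyne⟩
  have hxmax : ∀ z ∈ t.erase ⊤, ¬ x < z := fun z hz hlt => hlt.not_ge (hxmax' hz hlt.le)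
  have hxle : ∀ z ∈ t.erase ⊤, z ≤ x := by
    intro z hz
    by_cases hzx : z = x
    · exact hzx.le
    · rcases htc' (by exact_mod_cast hz) (by exact_mod_cast hxmem) hzx with h | h
      · exact h
      · exact absurd (lt_of_le_of_ne h (Ne.symm hzx)) (hxmax z hz)
  have hxt : x ∈ t := Finset.mem_of_mem_erase hxmem
  have hxnetop : x ≠ ⊤ := (Finset.mem_erase.1 hxmem).1
  have hyx : y ≤ x := hxle y hyne
  -- no element strictly between x and anything except ⊤ above x
  have hstrict : ∀ z : β, x < z → z = ⊤ := by
    intro z hxz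
    by_contra hzt
    have hznt : z ∉ t := by
      intro hzmem
      exact absurd hxz (hxmax z (Finset.mem_erase.2 ⟨hzt, hzmem⟩))
    have : IsChain (· ≤ ·) ((insert z t : Finset β) : Set β) := by
      rw [Finset.coe_insert]
      refine htc.insert fun b hb hne => ?_
      by_cases hbt : b = ⊤
      · exact Or.inl (hbt ▸ le_top)
      · exact Or.inr (le_trans (hxle b (Finset.mem_erase.2 ⟨hbt, hb⟩)) hxz.le)
    have := chain_card_le hg this
    rw [Finset.card_insert_of_notMem hznt, htcard] at this
    omega
  have hrho : rho x = n - 1 := by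
    have h1 : n - 1 ∈ Rset x := by
      refine ⟨t.erase ⊤, htc', fun z hz => hxle z (by exact_mod_cast hz), ?_⟩
      rw [Finset.card_erase_of_mem htt, htcard]
      omega
    have h2 := rho_lt_n_of_ne_top hg hxnetop
    have := le_rho_of_mem h1
    omega
  have hcov : {z : β | x ⋖ z} = {⊤} := by
    ext z
    simp only [Set.mem_setOf_eq, Set.mem_singleton_iff]
    constructor
    · intro hz; exact hstrict z hz.1
    · rintro rfl
      exact ⟨lt_of_le_of_ne le_top hxnetop,
        fun c hc hct => absurd (hstrict c hc) (ne_top_of_lt hct)⟩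
  exact ⟨x, hrho, by rw [hcov]; exact Set.ncard_singleton _, hyx⟩

lemma chain_card_le_of_ne_top (hg : IsGradedOfRank β n) {s : Finset β}
    (hs : IsChain (· ≤ ·) (s : Set β)) (hstop : (⊤ : β) ∉ s) : s.card ≤ n := by
  classical
  have : IsChain (· ≤ ·) ((insert ⊤ s : Finset β) : Set β) := by
    rw [Finset.coe_insert]
    exact hs.insert fun b hb _ => Or.inr le_top
  have := chain_card_le hg this
  rw [Finset.card_insert_of_notMem hstop] at this
  omega

end Graded

section Boundary
variable [PartialOrder β] [Finite β] {n : ℕ}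

variable [OrderBot β] [OrderTop β]

lemma boundary_eq (hg : IsGradedOfRank β n) (hn : 0 < n) :
    boundary β n = {y : β | y ≠ ⊤} := by
  ext y
  simp only [boundary, boundaryIn, Set.mem_setOf_eq, Set.mem_univ, true_and]
  constructor
  · rintro ⟨x, hx, -, hyx⟩ rfl
    have h1 := rho_mono hyx
    rw [rho_top' hg, hx] at h1
    omega
  · intro hy
    obtain ⟨x, h1, h2, h3⟩ := exists_special_coatom hg hn hy
    exact ⟨x, h1, h2, h3⟩

end Boundary

section UWord
lemma uWord_congr {m : ℕ} {S S' : Set ℕ}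
    (h : ∀ k, 1 ≤ k → k ≤ m → (k ∈ S ↔ k ∈ S')) : uWord K m S = uWord K m S' := by
  have hfun : (fun i : Fin m => if (i : ℕ) + 1 ∈ S then lb K else la K)
      = (fun i : Fin m => if (i : ℕ) + 1 ∈ S' then lb K else la K) := by
    funext i
    have := h ((i : ℕ) + 1) (by omega) (by omega)
    by_cases hi : (i : ℕ) + 1 ∈ S
    · rw [if_pos hi, if_pos (this.1 hi)]
    · rw [if_neg hi, if_neg (fun hc => hi (this.2 hc))]
  unfold uWord
  rw [hfun]

lemma uWord_succ (m : ℕ) (S : Set ℕ) :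
    uWord K (m + 1) S = uWord K m S * (if m + 1 ∈ S then lb K else la K) := by
  unfold uWord
  rw [List.ofFn_succ', List.prod_concat]
  simp only [Fin.coe_castSucc, Fin.val_last]

end UWord



section SemisuspLemmas
open Semisusp
variable [PartialOrder α] [OrderBot α] {S : Set α}

lemma incl_injective : Function.Injective (incl : α → Semisusp α S) := by
  intro a b h
  simpa [incl, Semisusp.ext_iff] using h

lemma incl_le_incl {a b : α} : (incl a : Semisusp α S) ≤ incl b ↔ a ≤ b := Iff.rfl

lemma not_q_le_incl {a : α} : ¬ ((q : Semisusp α S) ≤ incl a) := fun h => h.elim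

lemma incl_le_q {a : α} : (incl a : Semisusp α S) ≤ q ↔ a = ⊥ ∨ ∃ s ∈ S, a ≤ s := Iff.rfl

lemma bot_semisusp : (⊥ : Semisusp α S) = incl ⊥ := rfl

/-- retraction -/
def gret (z : Semisusp α S) : α := z.toOpt.getD ⊥

lemma gret_incl (a : α) : gret (incl a : Semisusp α S) = a := rfl

lemma incl_gret_of_le_incl {w : Semisusp α S} {x : α} (h : w ≤ incl x) :
    incl (gret w) = w := by
  rcases w with ⟨_ | a⟩
  · exact absurd h not_q_le_incl
  · rfl

lemma gret_le_of_le_incl {w : Semisusp α S} {x : α} (h : w ≤ incl x) : gret w ≤ x := by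
  rw [← incl_le_incl (S := S), incl_gret_of_le_incl h]
  exact h

lemma rho_incl [Finite α] (x : α) : rho (incl x : Semisusp α S) = rho x := by
  rw [rho_eq_sSup_Rset, rho_eq_sSup_Rset]
  congr 1
  ext k
  constructor
  · rintro ⟨u, huc, hsub, hcard⟩
    refine ⟨u.image gret, ?_, ?_, ?_⟩
    · intro a ha b hb hab
      simp only [Finset.coe_image, Set.mem_image, Finset.mem_coe] at ha hb
      obtain ⟨w1, hw1, rfl⟩ := ha
      obtain ⟨w2, hw2, rfl⟩ := hb
      have h1 := incl_gret_of_le_incl (hsub (by exact_mod_cast hw1))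
      have h2 := incl_gret_of_le_incl (hsub (by exact_mod_cast hw2))
      have hne : w1 ≠ w2 := fun hc => hab (by rw [hc])
      rcases huc (by exact_mod_cast hw1) (by exact_mod_cast hw2) hne with hle | hle
      · exact Or.inl (by show gret w1 ≤ gret w2; rw [← incl_le_incl (S := S), h1, h2]; exact hle)
      · exact Or.inr (by show gret w2 ≤ gret w1; rw [← incl_le_incl (S := S), h1, h2]; exact hle)
    · intro a ha
      simp only [Finset.coe_image, Set.mem_image, Finset.mem_coe] at ha
      obtain ⟨w, hw, rfl⟩ := ha
      exact gret_le_of_le_incl (hsub (by exact_mod_cast hw))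
    · rw [Finset.card_image_of_injOn, hcard]
      intro w1 hw1 w2 hw2 heq
      have h1 := incl_gret_of_le_incl (hsub (by exact_mod_cast hw1))
      have h2 := incl_gret_of_le_incl (hsub (by exact_mod_cast hw2))
      rw [← h1, ← h2, heq]
  · rintro ⟨s, hsc, hsub, hcard⟩
    refine ⟨s.image incl, ?_, ?_, ?_⟩
    · intro a ha b hb hab
      simp only [Finset.coe_image, Set.mem_image, Finset.mem_coe] at ha hb
      obtain ⟨w1, hw1, rfl⟩ := ha
      obtain ⟨w2, hw2, rfl⟩ := hb
      have hne : w1 ≠ w2 := fun hc => hab (by rw [hc])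
      rcases hsc (by exact_mod_cast hw1) (by exact_mod_cast hw2) hne with hle | hle
      · exact Or.inl (incl_le_incl.2 hle)
      · exact Or.inr (incl_le_incl.2 hle)
    · intro a ha
      simp only [Finset.coe_image, Set.mem_image, Finset.mem_coe] at ha
      obtain ⟨w, hw, rfl⟩ := ha
      simp only [Set.mem_Iic]
      exact incl_le_incl.2 (hsub (by exact_mod_cast hw))
    · rw [Finset.card_image_of_injective _ incl_injective, hcard]

lemma rho_bot_semisusp [Finite α] : rho (⊥ : Semisusp α S) = 0 :=
  rho_eq_zero_of_isMin isMin_bot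

end SemisuspLemmas

section UW2
variable {n : ℕ}

lemma uWord_no_n (hn : 0 < n) {Sn : Set ℕ} (h : n ∉ Sn) :
    uWord K n Sn = uWord K (n - 1) Sn * la K := by
  conv_lhs => rw [show n = (n - 1) + 1 by omega]
  rw [uWord_succ, show n - 1 + 1 = n by omega, if_neg h]

lemma uWord_insert_n (hn : 0 < n) (Sn : Set ℕ) :
    uWord K n (insert n Sn) = uWord K (n - 1) Sn * lb K := by
  conv_lhs => rw [show n = (n - 1) + 1 by omega]
  rw [uWord_succ, show n - 1 + 1 = n by omega, if_pos (Set.mem_insert _ _)]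
  congr 1
  refine uWord_congr K fun k h1 h2 => ?_
  simp only [Set.mem_insert_iff]
  constructor
  · rintro (rfl | hk)
    · omega
    · exact hk
  · exact Or.inr

end UW2

section MainAlpha
variable [PartialOrder α] [Finite α] [OrderBot α] [OrderTop α] {n : ℕ}

lemma bot_ne_top' (hg : IsGradedOfRank α n) (hn : 0 < n) : (⊥ : α) ≠ ⊤ := by
  intro hc
  have h1 : rho (⊥ : α) = 0 := rho_bot'
  have h2 := rho_top' hg
  rw [hc, h2] at h1
  omega

lemma rank_fun_eq : (fun y : α => rho y - rho (⊥ : α)) = fun y : α => rho y := by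
  funext y
  rw [rho_bot', Nat.sub_zero]

lemma n_not_mem_rho_image (hg : IsGradedOfRank α n) {C : Finset α}
    (hC : (C : Set α) ⊆ {y : α | y ≠ ⊤}) : n ∉ rho '' (C : Set α) := by
  rintro ⟨y, hy, hyr⟩
  have := rho_lt_n_of_ne_top hg (hC hy)
  omega

lemma ups_alpha (hg : IsGradedOfRank α n) (hn : 0 < n) :
    upsSet K (Set.univ : Set α) ⊥ n
      = upsSet K (boundary α n) ⊥ (n - 1) * la K
        + upsSet K (boundary α n) ⊥ (n - 1) * lb K := by
  classical
  have := Fintype.ofFinite α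
  have hB := boundary_eq hg hn
  have hbt := bot_ne_top' hg hn
  have hfin1 : (chainsIn (Set.univ : Set α) (⊥ : α)).Finite := Set.toFinite _
  have hfin2 : (chainsIn (boundary α n) (⊥ : α)).Finite := Set.toFinite _
  rw [upsSet, upsSet, finsum_mem_eq_finite_toFinset_sum _ hfin1,
    finsum_mem_eq_finite_toFinset_sum _ hfin2]
  simp only [rank_fun_eq]
  rw [← Finset.sum_filter_add_sum_filter_not hfin1.toFinset (fun C => (⊤ : α) ∈ C)
    (fun C => uWord K n (rho '' (C : Set α)))]
  have hA : ∑ C ∈ hfin1.toFinset.filter (fun C => (⊤ : α) ∉ C),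
      uWord K n (rho '' (C : Set α))
      = ∑ C' ∈ hfin2.toFinset, uWord K (n - 1) (rho '' (C' : Set α)) * la K := by
    have hset : hfin1.toFinset.filter (fun C => (⊤ : α) ∉ C) = hfin2.toFinset := by
      ext C
      simp only [Finset.mem_filter, Set.Finite.mem_toFinset, chainsIn, Set.mem_setOf_eq, hB]
      constructor
      · rintro ⟨⟨-, hc, hb⟩, ht⟩
        exact ⟨fun y hy hc' => ht (by rw [hc'] at hy; exact_mod_cast hy), hc, hb⟩
      · rintro ⟨hsub, hc, hb⟩
        exact ⟨⟨fun y _ => trivial, hc, hb⟩, fun ht => hsub ht rfl⟩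
    rw [hset]
    refine Finset.sum_congr rfl fun C hC => ?_
    simp only [Set.Finite.mem_toFinset, chainsIn, Set.mem_setOf_eq, hB] at hC
    exact uWord_no_n K hn (n_not_mem_rho_image hg hC.1)
  have hBt : ∑ C ∈ hfin1.toFinset.filter (fun C => (⊤ : α) ∈ C),
      uWord K n (rho '' (C : Set α))
      = ∑ C' ∈ hfin2.toFinset, uWord K (n - 1) (rho '' (C' : Set α)) * lb K := by
    refine Finset.sum_nbij' (fun C => C.erase ⊤) (fun C' => insert ⊤ C') ?_ ?_ ?_ ?_ ?_
    · intro C hC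
      simp only [Finset.mem_filter, Set.Finite.mem_toFinset, chainsIn, Set.mem_setOf_eq] at hC ⊢
      obtain ⟨⟨-, hc, hb⟩, ht⟩ := hC
      rw [hB]
      refine ⟨?_, hc.mono (by exact_mod_cast Finset.erase_subset _ _), ?_⟩
      · intro y hy
        exact (Finset.mem_erase.1 (by exact_mod_cast hy)).1
      · exact Finset.mem_erase.2 ⟨hbt, hb⟩
    · intro C' hC'
      simp only [Finset.mem_filter, Set.Finite.mem_toFinset, chainsIn, Set.mem_setOf_eq,
        hB] at hC' ⊢
      obtain ⟨hsub, hc, hb⟩ := hC'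
      refine ⟨⟨fun y _ => trivial, ?_, Finset.mem_insert_of_mem hb⟩, Finset.mem_insert_self _ _⟩
      rw [Finset.coe_insert]
      exact hc.insert fun b hb' _ => Or.inr le_top
    · intro C hC
      simp only [Finset.mem_filter] at hC
      exact Finset.insert_erase hC.2
    · intro C' hC'
      simp only [Set.Finite.mem_toFinset, chainsIn, Set.mem_setOf_eq, hB] at hC'
      exact Finset.erase_insert (fun ht => hC'.1 ht rfl)
    · intro C hC
      simp only [Finset.mem_filter, Set.Finite.mem_toFinset, chainsIn, Set.mem_setOf_eq] at hC
      obtain ⟨⟨-, hc, hb⟩, ht⟩ := hC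
      have himg : rho '' (C : Set α) = insert n (rho '' ((C.erase ⊤ : Finset α) : Set α)) := by
        conv_lhs => rw [← Finset.insert_erase ht]
        rw [Finset.coe_insert, Set.image_insert_eq, rho_top' hg]
      rw [himg, uWord_insert_n K hn]
  rw [hA, hBt, ← Finset.sum_mul, ← Finset.sum_mul]
  exact add_comm _ _

end MainAlpha

section MainSigma
open Semisusp
variable [PartialOrder α] [Finite α] [OrderBot α] [OrderTop α] {n : ℕ}

lemma rank_fun_eq' {β : Type} [PartialOrder β] [OrderBot β] :
    (fun y : β => rho y - rho (⊥ : β)) = fun y : β => rho y := by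
  funext y
  rw [rho_eq_zero_of_isMin isMin_bot, Nat.sub_zero]

lemma q_ne_incl {S : Set α} (a : α) : (q : Semisusp α S) ≠ incl a := by
  simp [q, incl, Semisusp.ext_iff]

lemma exists_incl_of_ne_q {S : Set α} {w : Semisusp α S} (h : w ≠ q) : ∃ a, w = incl a := by
  rcases w with ⟨_ | a⟩
  · exact absurd rfl h
  · exact ⟨a, rfl⟩

lemma isChain_image_incl {S : Set α} {s : Finset α} (hsc : IsChain (· ≤ ·) (s : Set α)) :
    IsChain (· ≤ ·) ((s.image (incl : α → Semisusp α S) : Finset (Semisusp α S)) :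
      Set (Semisusp α S)) := by
  intro a ha b hb hab
  simp only [Finset.coe_image, Set.mem_image, Finset.mem_coe] at ha hb
  obtain ⟨w1, hw1, rfl⟩ := ha
  obtain ⟨w2, hw2, rfl⟩ := hb
  have hne : w1 ≠ w2 := fun hc => hab (by rw [hc])
  rcases hsc (by exact_mod_cast hw1) (by exact_mod_cast hw2) hne with hle | hle
  · exact Or.inl (incl_le_incl.2 hle)
  · exact Or.inr (incl_le_incl.2 hle)

lemma isChain_gret_image {S : Set α} {u : Finset (Semisusp α S)}
    (hform : ∀ w ∈ u, ∃ a : α, w = incl a) (huc : IsChain (· ≤ ·) (u : Set (Semisusp α S))) :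
    IsChain (· ≤ ·) ((u.image gret : Finset α) : Set α) := by
  intro a ha b hb hab
  simp only [Finset.coe_image, Set.mem_image, Finset.mem_coe] at ha hb
  obtain ⟨w1, hw1, rfl⟩ := ha
  obtain ⟨w2, hw2, rfl⟩ := hb
  obtain ⟨a1, rfl⟩ := hform w1 hw1
  obtain ⟨a2, rfl⟩ := hform w2 hw2
  have hne : incl a1 ≠ incl a2 := fun hc => hab (by rw [hc])
  rcases huc (by exact_mod_cast hw1) (by exact_mod_cast hw2) hne with hle | hle
  · exact Or.inl (incl_le_incl.1 hle)
  · exact Or.inr (incl_le_incl.1 hle)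

lemma card_gret_image {S : Set α} {u : Finset (Semisusp α S)}
    (hform : ∀ w ∈ u, ∃ a : α, w = incl a) : (u.image gret).card = u.card := by
  rw [Finset.card_image_of_injOn]
  intro w1 hw1 w2 hw2 heq
  obtain ⟨a1, rfl⟩ := hform w1 hw1
  obtain ⟨a2, rfl⟩ := hform w2 hw2
  rw [gret_incl, gret_incl] at heq
  rw [heq]

lemma mem_gret_image {S : Set α} {u : Finset (Semisusp α S)}
    (hform : ∀ w ∈ u, ∃ a : α, w = incl a) {a : α} :
    a ∈ u.image gret ↔ incl a ∈ u := by
  constructor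
  · intro ha
    obtain ⟨w, hw, rfl⟩ := Finset.mem_image.1 ha
    obtain ⟨a1, rfl⟩ := hform w hw
    exact hw
  · intro ha
    have := Finset.mem_image_of_mem gret ha
    rwa [gret_incl] at this

lemma incl_le_q_iff (hg : IsGradedOfRank α n) (hn : 0 < n) {a : α} :
    (incl a : Semisusp α (boundary α n)) ≤ q ↔ a ≠ ⊤ := by
  rw [incl_le_q, boundary_eq hg hn]
  constructor
  · rintro (rfl | ⟨s, hs, has⟩)
    · exact bot_ne_top' hg hn
    · rintro rfl
      exact hs (top_le_iff.1 has)
  · intro ha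
    exact Or.inr ⟨a, ha, le_rfl⟩

lemma rho_q_eq (hg : IsGradedOfRank α n) (hn : 0 < n) :
    rho (q : Semisusp α (boundary α n)) = n := by
  classical
  refine le_antisymm (rho_le_of_forall fun k hk => ?_) (le_rho_of_mem ?_)
  · obtain ⟨u, huc, hsub, hcard⟩ := hk
    have hform : ∀ w ∈ u.erase q, ∃ a : α, a ≠ ⊤ ∧ w = incl a := by
      intro w hw
      obtain ⟨hwq, hwu⟩ := Finset.mem_erase.1 hw
      obtain ⟨a, rfl⟩ := exists_incl_of_ne_q hwq
      exact ⟨a, (incl_le_q_iff hg hn).1 (hsub (by exact_mod_cast hwu)), rfl⟩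
    have hform' : ∀ w ∈ u.erase q, ∃ a : α, w = incl a :=
      fun w hw => (hform w hw).imp fun a ha => ha.2
    have hchain : IsChain (· ≤ ·) (((u.erase q).image gret : Finset α) : Set α) :=
      isChain_gret_image hform'
        (huc.mono (by exact_mod_cast Finset.erase_subset _ _))
    have htop : (⊤ : α) ∉ (u.erase q).image gret := by
      intro hc
      have := (mem_gret_image hform').1 hc
      obtain ⟨a, ha, heq⟩ := hform _ this
      exact ha (incl_injective heq).symm
    have hle := chain_card_le_of_ne_top hg hchain htop
    rw [card_gret_image hform'] at hle
    have hcard' : u.card - 1 ≤ n := by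
      by_cases hq : q ∈ u
      · have := Finset.card_erase_of_mem hq
        omega
      · rw [Finset.erase_eq_of_notMem hq] at hle
        omega
    omega
  · obtain ⟨t, -, htc, hmax⟩ := exists_maximal_chain_superset (∅ : Finset α) (by simp)
    have htcard : t.card = n + 1 := hg t (by simp) htc (fun v _ hvc htv => hmax v hvc htv)
    have htt := top_mem_maximal_chain htc hmax
    have htc' : IsChain (· ≤ ·) ((t.erase ⊤ : Finset α) : Set α) :=
      htc.mono (by exact_mod_cast Finset.erase_subset _ _)
    have hqn : (q : Semisusp α (boundary α n)) ∉ (t.erase ⊤).image incl := by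
      intro hc
      obtain ⟨a, -, heq⟩ := Finset.mem_image.1 hc
      exact q_ne_incl a heq.symm
    refine ⟨insert q ((t.erase ⊤).image incl), ?_, ?_, ?_⟩
    · rw [Finset.coe_insert]
      refine (isChain_image_incl htc').insert fun b hb hne => ?_
      obtain ⟨a, ha, rfl⟩ := Finset.mem_image.1 (by exact_mod_cast hb)
      exact Or.inr ((incl_le_q_iff hg hn).2 (Finset.mem_erase.1 ha).1)
    · rw [Finset.coe_insert]
      refine Set.insert_subset (Set.mem_Iic.2 le_rfl) ?_
      intro w hw
      obtain ⟨a, ha, rfl⟩ := Finset.mem_image.1 (by exact_mod_cast hw)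
      exact (incl_le_q_iff hg hn).2 (Finset.mem_erase.1 ha).1
    · rw [Finset.card_insert_of_notMem hqn,
        Finset.card_image_of_injective _ incl_injective,
        Finset.card_erase_of_mem htt, htcard]
      omega

end MainSigma

section MainSigma2
open Semisusp
variable [PartialOrder α] [Finite α] [OrderBot α] [OrderTop α] {n : ℕ}

lemma chainsIn_finite {γ : Type} [PartialOrder γ] [Finite γ] (S : Set γ) (b0 : γ) :
    (chainsIn S b0).Finite := by
  have := Fintype.ofFinite γ
  exact Set.toFinite _

noncomputable def chainsFin {γ : Type} [PartialOrder γ] [Finite γ] (S : Set γ) (b0 : γ) :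
    Finset (Finset γ) := (chainsIn_finite S b0).toFinset

lemma mem_chainsFin {γ : Type} [PartialOrder γ] [Finite γ] {S : Set γ} {b0 : γ}
    {C : Finset γ} : C ∈ chainsFin S b0 ↔
      (C : Set γ) ⊆ S ∧ IsChain (· ≤ ·) (C : Set γ) ∧ b0 ∈ C := by
  rw [chainsFin, Set.Finite.mem_toFinset]
  rfl

lemma upsSet_eq_sum {γ : Type} [PartialOrder γ] [Finite γ] (S : Set γ) (b0 : γ) (m : ℕ) :
    upsSet K S b0 m = ∑ C ∈ chainsFin S b0,
      uWord K m ((fun y => rho y - rho b0) '' (C : Set γ)) :=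
  finsum_mem_eq_finite_toFinset_sum _ _

lemma gret_image_mem_chainsFin (hg : IsGradedOfRank α n) (hn : 0 < n)
    {C : Finset (Semisusp α (boundary α n))}
    (hc : IsChain (· ≤ ·) (C : Set (Semisusp α (boundary α n))))
    (hb : (⊥ : Semisusp α (boundary α n)) ∈ C)
    (hform : ∀ w ∈ C, ∃ a : α, a ≠ ⊤ ∧ w = incl a) :
    C.image gret ∈ chainsFin (boundary α n) (⊥ : α) := by
  have hform' : ∀ w ∈ C, ∃ a : α, w = incl a := fun w hw => (hform w hw).imp fun a ha => ha.2
  rw [mem_chainsFin]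
  refine ⟨?_, isChain_gret_image hform' hc, ?_⟩
  · intro y hy
    simp only [Finset.coe_image, Set.mem_image, Finset.mem_coe] at hy
    obtain ⟨w, hw, rfl⟩ := hy
    obtain ⟨a, ha, rfl⟩ := hform w hw
    rw [boundary_eq hg hn]
    simpa [gret_incl] using ha
  · exact (mem_gret_image hform').2 hb

lemma ups_semisusp (hg : IsGradedOfRank α n) (hn : 0 < n) :
    upsSet K (Set.univ : Set (Semisusp α (boundary α n))) ⊥ n
      = upsSet K (boundary α n) ⊥ (n - 1) * lb K
        + (upsSet K (boundary α n) ⊥ (n - 1) * lb K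
          + upsSet K (boundary α n) ⊥ (n - 1) * la K) := by
  classical
  have hB := boundary_eq hg hn
  have hbt := bot_ne_top' hg hn
  rw [upsSet_eq_sum, upsSet_eq_sum]
  simp only [rank_fun_eq']
  rw [← Finset.sum_filter_add_sum_filter_not
    (chainsFin (Set.univ : Set (Semisusp α (boundary α n))) ⊥)
    (fun C => (q : Semisusp α (boundary α n)) ∈ C)]
  rw [← Finset.sum_filter_add_sum_filter_not
    ((chainsFin (Set.univ : Set (Semisusp α (boundary α n))) ⊥).filter
      (fun C => ¬ (q : Semisusp α (boundary α n)) ∈ C))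
    (fun C => (incl ⊤ : Semisusp α (boundary α n)) ∈ C)]
  have hform_of : ∀ C : Finset (Semisusp α (boundary α n)),
      (q : Semisusp α (boundary α n)) ∉ C → (incl ⊤ : Semisusp α (boundary α n)) ∉ C →
      ∀ w ∈ C, ∃ a : α, a ≠ ⊤ ∧ w = incl a := by
    intro C hq ht w hw
    obtain ⟨a, rfl⟩ := exists_incl_of_ne_q (fun hc => hq (hc ▸ hw))
    refine ⟨a, fun hc => ht ?_, rfl⟩
    rw [← hc]
    exact hw
  have himgmem : ∀ C' ∈ chainsFin (boundary α n) (⊥ : α),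
      (C'.image (incl : α → Semisusp α (boundary α n))) ∈
        chainsFin (Set.univ : Set (Semisusp α (boundary α n))) ⊥
      ∧ (q : Semisusp α (boundary α n)) ∉ C'.image incl
      ∧ (incl ⊤ : Semisusp α (boundary α n)) ∉ C'.image incl := by
    intro C' hC'
    rw [mem_chainsFin] at hC'
    obtain ⟨hsub, hc, hb⟩ := hC'
    refine ⟨?_, ?_, ?_⟩
    · rw [mem_chainsFin]
      refine ⟨fun _ _ => trivial, isChain_image_incl hc, ?_⟩
      rw [bot_semisusp]
      exact Finset.mem_image_of_mem _ hb
    · intro hc'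
      obtain ⟨a, -, heq⟩ := Finset.mem_image.1 hc'
      exact q_ne_incl a heq.symm
    · intro hc'
      obtain ⟨a, ha, heq⟩ := Finset.mem_image.1 hc'
      have : a = ⊤ := incl_injective heq
      rw [hB] at hsub
      exact hsub (by exact_mod_cast ha) this
  have hback : ∀ C' ∈ chainsFin (boundary α n) (⊥ : α),
      ((C'.image (incl : α → Semisusp α (boundary α n))).image gret) = C' := by
    intro C' _
    rw [Finset.image_image]
    have : (gret ∘ (incl : α → Semisusp α (boundary α n))) = id := funext fun a => gret_incl a
    rw [this, Finset.image_id]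
  have hfwd : ∀ C : Finset (Semisusp α (boundary α n)),
      (∀ w ∈ C, ∃ a : α, w = incl a) → (C.image gret).image incl = C := by
    intro C hform
    rw [Finset.image_image]
    have : ∀ w ∈ C, (incl ∘ gret) w = id w := by
      intro w hw
      obtain ⟨a, rfl⟩ := hform w hw
      simp [Function.comp, gret_incl]
    rw [Finset.image_congr (fun w hw => this w hw), Finset.image_id]
  -- Part 0 : chains avoiding q and incl ⊤
  have h0 : ∑ C ∈ ((chainsFin (Set.univ : Set (Semisusp α (boundary α n))) ⊥).filter
        (fun C => ¬ (q : Semisusp α (boundary α n)) ∈ C)).filter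
        (fun C => ¬ (incl ⊤ : Semisusp α (boundary α n)) ∈ C),
      uWord K n (rho '' (C : Set (Semisusp α (boundary α n))))
      = ∑ C' ∈ chainsFin (boundary α n) (⊥ : α),
          uWord K (n - 1) (rho '' (C' : Set α)) * la K := by
    refine (Finset.sum_nbij' (fun C' => C'.image incl) (fun C => C.image gret)
      ?_ ?_ ?_ ?_ ?_).symm
    · intro C' hC'
      obtain ⟨h1, h2, h3⟩ := himgmem C' hC'
      simp only [Finset.mem_filter]
      exact ⟨⟨h1, h2⟩, h3⟩
    · intro C hC
      simp only [Finset.mem_filter, mem_chainsFin] at hC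
      obtain ⟨⟨⟨-, hc, hb⟩, hq⟩, ht⟩ := hC
      exact gret_image_mem_chainsFin hg hn hc hb (hform_of C hq ht)
    · exact hback
    · intro C hC
      simp only [Finset.mem_filter, mem_chainsFin] at hC
      obtain ⟨⟨⟨-, hc, hb⟩, hq⟩, ht⟩ := hC
      exact hfwd C (fun w hw => (hform_of C hq ht w hw).imp fun a ha => ha.2)
    · intro C' hC'
      rw [mem_chainsFin] at hC'
      have himg : rho '' ((C'.image (incl : α → Semisusp α (boundary α n)) : Finset _) :
          Set (Semisusp α (boundary α n))) = rho '' (C' : Set α) := by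
        rw [Finset.coe_image, Set.image_image]
        simp only [rho_incl]
      rw [himg, uWord_no_n K hn]
      rw [hB] at hC'
      exact n_not_mem_rho_image hg hC'.1
  -- Part 1 : chains through incl ⊤
  have h1 : ∑ C ∈ ((chainsFin (Set.univ : Set (Semisusp α (boundary α n))) ⊥).filter
        (fun C => ¬ (q : Semisusp α (boundary α n)) ∈ C)).filter
        (fun C => (incl ⊤ : Semisusp α (boundary α n)) ∈ C),
      uWord K n (rho '' (C : Set (Semisusp α (boundary α n))))
      = ∑ C' ∈ chainsFin (boundary α n) (⊥ : α),
          uWord K (n - 1) (rho '' (C' : Set α)) * lb K := by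
    refine (Finset.sum_nbij' (fun C' => insert (incl ⊤) (C'.image incl))
      (fun C => (C.erase (incl ⊤)).image gret) ?_ ?_ ?_ ?_ ?_).symm
    · intro C' hC'
      obtain ⟨h1, h2, h3⟩ := himgmem C' hC'
      rw [mem_chainsFin] at h1
      obtain ⟨-, hc, hb⟩ := h1
      simp only [Finset.mem_filter, mem_chainsFin]
      refine ⟨⟨⟨fun _ _ => trivial, ?_, Finset.mem_insert_of_mem hb⟩, ?_⟩,
        Finset.mem_insert_self _ _⟩
      · rw [Finset.coe_insert]
        refine hc.insert fun b hb' hne => ?_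
        obtain ⟨a, ha, rfl⟩ := Finset.mem_image.1 (by exact_mod_cast hb')
        rw [mem_chainsFin] at hC'
        have h4 := hC'.1 (by exact_mod_cast ha)
        rw [hB] at h4
        exact Or.inr (incl_le_incl.2 le_top)
      · intro hc'
        rcases Finset.mem_insert.1 hc' with heq | hmem
        · exact q_ne_incl ⊤ heq
        · exact h2 hmem
    · intro C hC
      simp only [Finset.mem_filter, mem_chainsFin] at hC
      obtain ⟨⟨⟨-, hc, hb⟩, hq⟩, ht⟩ := hC
      have hce : IsChain (· ≤ ·) ((C.erase (incl ⊤) : Finset _) :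
          Set (Semisusp α (boundary α n))) :=
        hc.mono (by exact_mod_cast Finset.erase_subset _ _)
      have hbe : (⊥ : Semisusp α (boundary α n)) ∈ C.erase (incl ⊤) := by
        refine Finset.mem_erase.2 ⟨?_, hb⟩
        rw [bot_semisusp]
        exact fun hc' => hbt (incl_injective hc')
      refine gret_image_mem_chainsFin hg hn hce hbe ?_
      intro w hw
      obtain ⟨hwne, hwC⟩ := Finset.mem_erase.1 hw
      obtain ⟨a, rfl⟩ := exists_incl_of_ne_q (fun hc' => hq (hc' ▸ hwC))
      exact ⟨a, fun hc' => hwne (by rw [hc']), rfl⟩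
    · intro C' hC'
      rw [Finset.erase_insert, hback C' hC']
      rw [mem_chainsFin] at hC'
      intro hc'
      obtain ⟨a, ha, heq⟩ := Finset.mem_image.1 hc'
      have : a = ⊤ := incl_injective heq
      rw [hB] at hC'
      exact hC'.1 (by exact_mod_cast ha) this
    · intro C hC
      simp only [Finset.mem_filter, mem_chainsFin] at hC
      obtain ⟨⟨⟨-, hc, hb⟩, hq⟩, ht⟩ := hC
      have hform : ∀ w ∈ C.erase (incl ⊤), ∃ a : α, w = incl a := by
        intro w hw
        exact exists_incl_of_ne_q (fun hc' => hq (hc' ▸ (Finset.mem_erase.1 hw).2))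
      rw [hfwd _ hform, Finset.insert_erase ht]
    · intro C' hC'
      rw [mem_chainsFin] at hC'
      have himg : rho '' ((insert (incl ⊤) (C'.image incl) : Finset (Semisusp α (boundary α n))) :
          Set (Semisusp α (boundary α n)))
          = insert n (rho '' (C' : Set α)) := by
        rw [Finset.coe_insert, Set.image_insert_eq, Finset.coe_image, Set.image_image]
        simp only [rho_incl, rho_top' hg]
      rw [himg, uWord_insert_n K hn]
  -- Part 2 : chains through q
  have h2 : ∑ C ∈ (chainsFin (Set.univ : Set (Semisusp α (boundary α n))) ⊥).filter
        (fun C => (q : Semisusp α (boundary α n)) ∈ C),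
      uWord K n (rho '' (C : Set (Semisusp α (boundary α n))))
      = ∑ C' ∈ chainsFin (boundary α n) (⊥ : α),
          uWord K (n - 1) (rho '' (C' : Set α)) * lb K := by
    refine (Finset.sum_nbij' (fun C' => insert q (C'.image incl))
      (fun C => (C.erase q).image gret) ?_ ?_ ?_ ?_ ?_).symm
    · intro C' hC'
      obtain ⟨h1, h2, h3⟩ := himgmem C' hC'
      rw [mem_chainsFin] at h1
      obtain ⟨-, hc, hb⟩ := h1
      simp only [Finset.mem_filter, mem_chainsFin]
      refine ⟨⟨fun _ _ => trivial, ?_, Finset.mem_insert_of_mem hb⟩,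
        Finset.mem_insert_self _ _⟩
      rw [Finset.coe_insert]
      refine hc.insert fun b hb' hne => ?_
      obtain ⟨a, ha, rfl⟩ := Finset.mem_image.1 (by exact_mod_cast hb')
      rw [mem_chainsFin] at hC'
      have h4 := hC'.1 (by exact_mod_cast ha)
      rw [hB] at h4
      exact Or.inr ((incl_le_q_iff hg hn).2 h4)
    · intro C hC
      simp only [Finset.mem_filter, mem_chainsFin] at hC
      obtain ⟨⟨-, hc, hb⟩, hq⟩ := hC
      have hce : IsChain (· ≤ ·) ((C.erase q : Finset _) :
          Set (Semisusp α (boundary α n))) :=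
        hc.mono (by exact_mod_cast Finset.erase_subset _ _)
      have hbe : (⊥ : Semisusp α (boundary α n)) ∈ C.erase q := by
        refine Finset.mem_erase.2 ⟨?_, hb⟩
        rw [bot_semisusp]
        exact fun hc' => q_ne_incl ⊥ hc'.symm
      refine gret_image_mem_chainsFin hg hn hce hbe ?_
      intro w hw
      obtain ⟨hwne, hwC⟩ := Finset.mem_erase.1 hw
      obtain ⟨a, rfl⟩ := exists_incl_of_ne_q hwne
      have hle : (incl a : Semisusp α (boundary α n)) ≤ q ∨
          (q : Semisusp α (boundary α n)) ≤ incl a := by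
        rcases hc (by exact_mod_cast hwC) (by exact_mod_cast hq) hwne with hle | hle
        · exact Or.inl hle
        · exact Or.inr hle
      rcases hle with hle | hle
      · exact ⟨a, (incl_le_q_iff hg hn).1 hle, rfl⟩
      · exact absurd hle not_q_le_incl
    · intro C' hC'
      rw [Finset.erase_insert, hback C' hC']
      intro hc'
      obtain ⟨a, -, heq⟩ := Finset.mem_image.1 hc'
      exact q_ne_incl a heq.symm
    · intro C hC
      simp only [Finset.mem_filter, mem_chainsFin] at hC
      obtain ⟨⟨-, hc, hb⟩, hq⟩ := hC
      have hform : ∀ w ∈ C.erase q, ∃ a : α, w = incl a := by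
        intro w hw
        exact exists_incl_of_ne_q (Finset.mem_erase.1 hw).1
      rw [hfwd _ hform, Finset.insert_erase hq]
    · intro C' hC'
      have himg : rho '' ((insert q (C'.image incl) : Finset (Semisusp α (boundary α n))) :
          Set (Semisusp α (boundary α n)))
          = insert n (rho '' (C' : Set α)) := by
        rw [Finset.coe_insert, Set.image_insert_eq, Finset.coe_image, Set.image_image]
        simp only [rho_incl, rho_q_eq hg hn]
      rw [himg, uWord_insert_n K hn]
  rw [h0, h1, h2, ← Finset.sum_mul, ← Finset.sum_mul]

end MainSigma2

section Final
variable (K : Type) [Field K] [CharZero K]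

lemma toAB_la : toAB K (la K) = la K - lb K := by
  simp [toAB, la, FreeAlgebra.lift_ι_apply]

lemma toAB_lb : toAB K (lb K) = lb K := by
  simp [toAB, lb, FreeAlgebra.lift_ι_apply]

end Final

/-- If `P` is an Eulerian poset of positive rank `n`, then the local
`cd`-index of `P` vanishes: `ℓ^Φ_P = Φ_{Σ̃P} - Φ_{∂P}·c = 0`; equivalently
`Ψ_P = Ψ_{∂P}·a` and `Φ_{Σ̃P} = Φ_{∂P}·c`. -/
theorem localCdIndex_eulerian_eq_zero
    (K : Type) [Field K] [CharZero K]
    (α : Type) [PartialOrder α] [Finite α] [OrderBot α] [OrderTop α] (n : ℕ) (hn : 0 < n)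
    (h : IsEulerianOfRank α n) :
    psiS K (Set.univ : Set (Semisusp α (boundary α n))) ⊥ n
        - psiS K (boundary α n) ⊥ (n - 1) * lc K = 0 ∧
    psiS K (Set.univ : Set α) ⊥ n = psiS K (boundary α n) ⊥ (n - 1) * la K ∧
    psiS K (Set.univ : Set (Semisusp α (boundary α n))) ⊥ n
      = psiS K (boundary α n) ⊥ (n - 1) * lc K := by
  have hg : IsGradedOfRank α n := h.2.2.1
  have e1 := ups_alpha K (α := α) hg hn
  have e2 := ups_semisusp K (α := α) hg hn
  have hpsi1 : psiS K (Set.univ : Set α) ⊥ n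
      = psiS K (boundary α n) ⊥ (n - 1) * la K := by
    rw [psiS, e1]
    simp only [map_add, map_mul]
    rw [toAB_la, toAB_lb, psiS]
    generalize toAB K (upsSet K (boundary α n) ⊥ (n - 1)) = X
    rw [mul_sub]
    abel
  have hpsi2 : psiS K (Set.univ : Set (Semisusp α (boundary α n))) ⊥ n
      = psiS K (boundary α n) ⊥ (n - 1) * lc K := by
    rw [psiS, e2]
    simp only [map_add, map_mul]
    rw [toAB_la, toAB_lb, psiS, lc]
    generalize toAB K (upsSet K (boundary α n) ⊥ (n - 1)) = X
    rw [mul_sub, mul_add]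
    abel
  exact ⟨sub_eq_zero_of_eq hpsi2, hpsi1, hpsi2⟩

end CDIndex
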